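/- Let N ≥ 2 and let t_1⋯t_p be an admissible block with generalized Thue–Morse sequence (θ_i). Then for every n ≥ 0, the periodic sequence (θ_1⋯θ_{2^n p} θ̄_1⋯θ̄_{2^n p})^∞ (where θ̄_k = N−1−θ_k) is shift-maximal: every shift σ^i of it is lexicographically ≤ the sequence itself, for all i ≥ 1. -/

import Mathlib

/-- Reflection of a block: each digit `c` becomes `N - 1 - c`. -/
def reflB (N : ℕ) (w : List ℕ) : List ℕ := w.map (fun c => N - 1 - c)

/-- The block `w` with its last digit incremented by one. -/
def plusB (w : List ℕ) : List ℕ := w.dropLast ++ [w.getLast! + 1]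

/-- The `i`-th cyclic rotation of the block `w` (0-indexed). -/
def rotB (w : List ℕ) (i : ℕ) : List ℕ := w.drop i ++ w.take i

/-- The lexicographic inequalities defining admissibility of a block. -/
def AdmissibleIneq (N : ℕ) (w : List ℕ) : Prop :=
  ∀ i < w.length,
    reflB N w ≤ rotB w i ∧ plusB (w.drop i) ++ reflB N (w.take i) ≤ plusB w

/-- An admissible block in `{0, …, N-1}`. -/
def Admissible (N : ℕ) (w : List ℕ) : Prop :=
  w ≠ [] ∧ (∀ c ∈ w, c < N) ∧ w.getLast! < N - 1 ∧ AdmissibleIneq N w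

/-- Prefixes of the generalized Thue–Morse sequence generated by `plusB w`:
`gtmBlock N w n` is the prefix `θ_1 ⋯ θ_{2^n p}`. -/
def gtmBlock (N : ℕ) (w : List ℕ) : ℕ → List ℕ
  | 0 => plusB w
  | n + 1 => gtmBlock N w n ++ plusB (reflB N (gtmBlock N w n))

/-- The generalized Thue–Morse sequence generated by `plusB w`, 0-indexed:
`gtm N w n = θ_{n+1}`. -/
def gtm (N : ℕ) (w : List ℕ) : ℕ → ℕ := fun n => (gtmBlock N w n).getD n 0

/-- Strict lexicographic order on infinite sequences of digits. -/
def seqLt (a b : ℕ → ℕ) : Prop := ∃ n, (∀ k < n, a k = b k) ∧ a n < b n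

/-- Lexicographic order on infinite sequences of digits. -/
def seqLe (a b : ℕ → ℕ) : Prop := seqLt a b ∨ a = b

/-- Shift of a sequence by `k` places. -/
def shift (a : ℕ → ℕ) (k : ℕ) : ℕ → ℕ := fun n => a (n + k)

/-- The periodic sequence `w^∞` obtained by repeating the block `w`. -/
def per (w : List ℕ) : ℕ → ℕ := fun n => w.getD (n % w.length) 0

/-- Reflection of an infinite sequence. -/
def reflSeq (N : ℕ) (a : ℕ → ℕ) : ℕ → ℕ := fun n => N - 1 - a n

/-- The classical Thue–Morse sequence: parity of the binary digit sum. -/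
def tm (i : ℕ) : ℕ := (Nat.digits 2 i).sum % 2

/-- Number of length-`n` words appearing in sequences of `Z`. -/
noncomputable def wordCount (Z : Set (ℕ → ℕ)) (n : ℕ) : ℕ :=
  Set.ncard { u : List ℕ | u.length = n ∧ ∃ d ∈ Z, ∀ k < n, u.getD k 0 = d k }

/-- `Z` has topological entropy `h`. -/
def hasEntropy (Z : Set (ℕ → ℕ)) (h : ℝ) : Prop :=
  Filter.Tendsto (fun n : ℕ => Real.log (wordCount Z n) / n) Filter.atTop (nhds h)

namespace S12
open List

lemma lt_def {l m : List ℕ} : l < m ↔ List.Lex (· < ·) l m := Iff.rfl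

lemma lex_cons_cons {a b : ℕ} {l m : List ℕ} :
    (a :: l) < (b :: m) ↔ a < b ∨ (a = b ∧ l < m) := by
  rw [lt_def]
  constructor
  · intro h
    cases h with
    | cons h => exact Or.inr ⟨rfl, h⟩
    | rel h => exact Or.inl h
  · rintro (h | ⟨rfl, h⟩)
    · exact List.Lex.rel h
    · exact List.Lex.cons h

lemma not_lt_nil (l : List ℕ) : ¬ l < [] := List.not_lex_nil

lemma append_lt_append_iff : ∀ {x y : List ℕ} (u v : List ℕ), x.length = y.length →
    (x ++ u < y ++ v ↔ x < y ∨ (x = y ∧ u < v))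
  | [], [], u, v, _ => by
      constructor
      · intro h; exact Or.inr ⟨rfl, h⟩
      · rintro (h | ⟨_, h⟩)
        · exact absurd h (not_lt_nil _)
        · exact h
  | a :: x, b :: y, u, v, h => by
      have h' : x.length = y.length := by simpa using h
      simp only [List.cons_append, lex_cons_cons, append_lt_append_iff u v h', List.cons.injEq]
      tauto

lemma append_lt_of_lt {x y : List ℕ} (u v : List ℕ) (h : x.length = y.length)
    (hxy : x < y) : x ++ u < y ++ v :=
  (append_lt_append_iff u v h).2 (Or.inl hxy)

lemma append_lt_append_left {x : List ℕ} {u v : List ℕ} (h : u < v) : x ++ u < x ++ v :=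
  (append_lt_append_iff u v rfl).2 (Or.inr ⟨rfl, h⟩)



lemma singleton_lt {a b : ℕ} : ([a] : List ℕ) < [b] ↔ a < b := by
  rw [lt_def]; exact List.lex_singleton_iff a b

-- concat decomposition of a nonempty list
lemma exists_concat {V : List ℕ} (h : V ≠ []) : ∃ U b, V = U ++ [b] := by
  rcases List.eq_nil_or_concat V with h' | ⟨U, b, h'⟩
  · exact absurd h' h
  · exact ⟨U, b, by simpa using h'⟩

lemma getLast!_concat (U : List ℕ) (b : ℕ) : (U ++ [b]).getLast! = b :=
  List.getLast!_of_getLast? (by simp)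

@[simp] lemma plusB_concat (U : List ℕ) (b : ℕ) : plusB (U ++ [b]) = U ++ [b + 1] := by
  unfold plusB
  rw [List.dropLast_concat, getLast!_concat]

lemma plusB_length {V : List ℕ} (h : V ≠ []) : (plusB V).length = V.length := by
  obtain ⟨U, b, rfl⟩ := exists_concat h
  simp

lemma plusB_ne_nil {V : List ℕ} (h : V ≠ []) : plusB V ≠ [] := by
  obtain ⟨U, b, rfl⟩ := exists_concat h
  simp

lemma plusB_append (x : List ℕ) {V : List ℕ} (h : V ≠ []) :
    plusB (x ++ V) = x ++ plusB V := by
  obtain ⟨U, b, rfl⟩ := exists_concat h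
  rw [← List.append_assoc, plusB_concat, plusB_concat, List.append_assoc]

lemma lt_plusB {V : List ℕ} (h : V ≠ []) : V < plusB V := by
  obtain ⟨U, b, rfl⟩ := exists_concat h
  rw [plusB_concat]
  exact append_lt_append_left (singleton_lt.2 (Nat.lt_succ_self b))

@[simp] lemma reflB_length (N : ℕ) (V : List ℕ) : (reflB N V).length = V.length :=
  List.length_map _

@[simp] lemma reflB_append (N : ℕ) (x y : List ℕ) :
    reflB N (x ++ y) = reflB N x ++ reflB N y := List.map_append

@[simp] lemma reflB_nil (N : ℕ) : reflB N [] = [] := rfl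

lemma reflB_ne_nil {N : ℕ} {V : List ℕ} (h : V ≠ []) : reflB N V ≠ [] := by
  simpa [reflB] using h

lemma reflB_reflB {N : ℕ} {V : List ℕ} (h : ∀ c ∈ V, c ≤ N - 1) :
    reflB N (reflB N V) = V := by
  unfold reflB
  rw [List.map_map]
  conv_rhs => rw [← List.map_id V]
  apply List.map_congr_left
  intro c hc
  have := h c hc
  simp only [Function.comp_apply, id]
  omega

-- x < plusB y ↔ x ≤ y for same-length lists
lemma le_iff_lt_or_eq' {x y : List ℕ} : x ≤ y ↔ x < y ∨ x = y := le_iff_lt_or_eq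

lemma lt_plusB_iff_le : ∀ {x y : List ℕ}, x.length = y.length → y ≠ [] →
    (x < plusB y ↔ x ≤ y) := by
  intro x y hlen hy
  constructor
  · intro h
    obtain ⟨U, b, rfl⟩ := exists_concat hy
    have hx : x ≠ [] := by
      intro h'; subst h'; simp at hlen
    obtain ⟨X, a, rfl⟩ := exists_concat hx
    have hl : X.length = U.length := by
      simpa using hlen
    rw [plusB_concat, append_lt_append_iff _ _ hl] at h
    rcases h with h | ⟨rfl, h⟩
    · exact le_of_lt ((append_lt_append_iff _ _ hl).2 (Or.inl h))
    · rw [singleton_lt] at h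
      rcases Nat.lt_succ_iff_lt_or_eq.1 h with h | rfl
      · exact le_of_lt (append_lt_append_left (singleton_lt.2 h))
      · exact le_refl _
  · intro h
    exact lt_of_le_of_lt h (lt_plusB hy)

lemma reflB_lt_reflB {N : ℕ} : ∀ {x y : List ℕ}, x.length = y.length →
    (∀ c ∈ y, c ≤ N - 1) → x < y → reflB N y < reflB N x
  | [], [], _, _, h => absurd h (not_lt_nil _)
  | a :: x, b :: y, hlen, hy, h => by
      have hl : x.length = y.length := by simpa using hlen
      rw [lex_cons_cons] at h
      show (N - 1 - b) :: reflB N y < (N - 1 - a) :: reflB N x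
      rw [lex_cons_cons]
      rcases h with h | ⟨rfl, h⟩
      · left
        have hb := hy b (by simp)
        omega
      · right
        exact ⟨rfl, reflB_lt_reflB hl (fun c hc => hy c (by simp [hc])) h⟩

lemma reflB_le_reflB {N : ℕ} {x y : List ℕ} (hlen : x.length = y.length)
    (hy : ∀ c ∈ y, c ≤ N - 1) (h : x ≤ y) : reflB N y ≤ reflB N x := by
  rcases le_iff_lt_or_eq'.1 h with h | rfl
  · exact le_of_lt (reflB_lt_reflB hlen hy h)
  · exact le_refl _


lemma reflB_digits (N : ℕ) (V : List ℕ) : ∀ c ∈ reflB N V, c ≤ N - 1 := by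
  intro c hc
  simp only [reflB, List.mem_map] at hc
  obtain ⟨x, _, rfl⟩ := hc
  omega

/-- splitting `plusB V` as `x ++ c` with `c ≠ []` lifts to a split of `V`. -/
lemma plusB_split {V x c : List ℕ} (hV : V ≠ []) (h : plusB V = x ++ c) (hc : c ≠ []) :
    ∃ d, d ≠ [] ∧ V = x ++ d ∧ plusB d = c := by
  obtain ⟨U, b, rfl⟩ := exists_concat hV
  obtain ⟨c₀, e, rfl⟩ := exists_concat hc
  rw [plusB_concat, ← List.append_assoc] at h
  obtain ⟨h1, h2⟩ := List.append_inj' h (by simp)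
  have h2' : b + 1 = e := by simpa using h2
  refine ⟨c₀ ++ [b], by simp, by rw [h1, List.append_assoc], ?_⟩
  rw [plusB_concat, h2']

/-- The digit invariants we maintain for the blocks `Bₙ`. -/
def Good (N : ℕ) (V : List ℕ) : Prop :=
  (∀ c ∈ V, c ≤ N - 1) ∧ ∃ U b, V = U ++ [b] ∧ 1 ≤ b ∧ b ≤ N - 1

lemma Good.ne_nil {N V} (h : Good N V) : V ≠ [] := by
  obtain ⟨_, U, b, rfl, _⟩ := h
  simp

/-- `plusB (reflB N (plusB (reflB N V))) = V` : "minus-plus" cancellation. -/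
lemma plus_refl_plus_refl {N : ℕ} {V : List ℕ} (h : Good N V) :
    plusB (reflB N (plusB (reflB N V))) = V := by
  obtain ⟨hd, U, b, rfl, hb1, hb2⟩ := h
  have hUd : ∀ c ∈ U, c ≤ N - 1 := fun c hc => hd c (by simp [hc])
  rw [reflB_append, show reflB N [b] = [N - 1 - b] from rfl, plusB_concat,
    reflB_append, reflB_reflB hUd, show reflB N [N - 1 - b + 1] = [N - 1 - (N - 1 - b + 1)] from rfl,
    plusB_concat]
  congr 2
  omega

/-- The main invariant: all proper "rotation-with-plus" words are < `plusB V`. -/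
def Phi (N : ℕ) (V : List ℕ) : Prop :=
  ∀ x y, V = x ++ y → x ≠ [] → y ≠ [] → plusB y ++ reflB N x < plusB V

lemma drop_plusB {V : List ℕ} {j : ℕ} (h : j < V.length) :
    (plusB V).drop j = plusB (V.drop j) := by
  have hV : V ≠ [] := by intro h'; subst h'; simp at h
  obtain ⟨U, b, rfl⟩ := exists_concat hV
  have hj : j ≤ U.length := by simpa using Nat.lt_succ_iff.1 (by simpa using h)
  rw [plusB_concat, List.drop_append_of_le_length hj, List.drop_append_of_le_length hj,
    plusB_concat]

lemma fam2_strict {N : ℕ} {w : List ℕ} (hadm : Admissible N w) :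
    ∀ x d, w = x ++ d → x ≠ [] → d ≠ [] → plusB d ++ reflB N x < plusB w := by
  intro x d hw hx hd
  obtain ⟨hwne, _, _, hineq⟩ := hadm
  have hxlen : x.length < w.length := by
    rw [hw, List.length_append]
    have := List.length_pos_iff.2 hd
    omega
  have h2 := (hineq x.length hxlen).2
  rw [show w.drop x.length = d by rw [hw, List.drop_left],
      show w.take x.length = x by rw [hw, List.take_left]] at h2
  refine lt_of_le_of_ne h2 ?_
  intro E
  have hdlen : d.length < w.length := by
    rw [hw, List.length_append]
    have := List.length_pos_iff.2 hx
    omega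
  have hkey : plusB (w.drop d.length) = reflB N x := by
    rw [← drop_plusB hdlen, ← E, ← plusB_length hd, List.drop_left]
  set z := w.drop d.length with hz
  set t := w.take d.length with ht
  have hzt : w = t ++ z := (List.take_append_drop d.length w).symm
  have hzne : z ≠ [] := by
    intro h'
    have := congrArg List.length h'
    simp [hz] at this
    omega
  have hrot : rotB w d.length < reflB N w := by
    show z ++ t < reflB N w
    rw [show reflB N w = reflB N x ++ reflB N d by rw [hw, reflB_append]]
    refine append_lt_of_lt _ _ ?_ ?_
    · have h1 : z.length = w.length - d.length := by rw [hz, List.length_drop]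
      have h2' : w.length = x.length + d.length := by rw [hw, List.length_append]
      have h3 : 0 < d.length := List.length_pos_iff.2 hd
      rw [reflB_length]
      omega
    · rw [← hkey]
      exact lt_plusB hzne
  exact absurd (hineq d.length hdlen).1 (not_le_of_gt hrot)

lemma phi_base {N : ℕ} {w : List ℕ} (hadm : Admissible N w) :
    Phi N (plusB w ++ reflB N (plusB w)) := by
  intro x y hxy hx hy
  obtain ⟨hwne, hdig, hlast, hineq⟩ := hadm
  have hwd : ∀ c ∈ w, c ≤ N - 1 := by
    intro c hc
    have := hdig c hc
    omega
  obtain ⟨U, b0, hwU⟩ := exists_concat hwne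
  have hb0 : w.getLast! = b0 := by rw [hwU, getLast!_concat]
  have hlast' : b0 < N - 1 := by rwa [hb0] at hlast
  have hvne : plusB w ≠ [] := plusB_ne_nil hwne
  have hvbne : reflB N (plusB w) ≠ [] := reflB_ne_nil hvne
  have hvlen : (plusB w).length = w.length := plusB_length hwne
  have hPvb : plusB (reflB N (plusB w)) = reflB N w := by
    have hgood : Good N (reflB N w) := by
      refine ⟨reflB_digits N w, reflB N U, N - 1 - b0, by rw [hwU, reflB_append]; rfl, ?_, ?_⟩
      · omega
      · omega
    have := plus_refl_plus_refl hgood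
    rwa [reflB_reflB hwd] at this
  have hfam0 : reflB N w ≤ w := by
    have h0 := (hineq 0 (by simp [List.length_pos_iff.2 hwne])).1
    simpa [rotB] using h0
  have hrw : reflB N w < plusB w := lt_of_le_of_lt hfam0 (lt_plusB hwne)
  have hPlusAll : plusB (plusB w ++ reflB N (plusB w)) = plusB w ++ reflB N w := by
    rw [plusB_append _ hvbne, hPvb]
  have hrwlen : (reflB N w).length = w.length := reflB_length N w
  rcases List.append_eq_append_iff.1 hxy.symm with ⟨a', hv', hy'⟩ | ⟨c', hx', hvb'⟩
  · -- hv' : plusB w = x ++ a', hy' : y = a' ++ reflB N (plusB w)  (fam2 case)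
    rcases List.eq_nil_or_concat a' with rfl | ⟨_, _, ha'⟩
    · simp only [List.append_nil] at hv'
      simp only [List.nil_append] at hy'
      rw [hPlusAll, hy', hPvb, ← hv']
      refine append_lt_of_lt _ _ ?_ hrw
      rw [reflB_length, hvlen]
    · have hc'ne : a' ≠ [] := by rw [ha']; simp
      obtain ⟨d, hdne, hwd', hpd⟩ := plusB_split hwne hv' hc'ne
      have hfam2 := fam2_strict ⟨hwne, hdig, hlast, hineq⟩ x d hwd' hx hdne
      have hPy : plusB y = plusB d ++ reflB N w := by
        rw [hy', plusB_append _ hvbne, hPvb, ← hpd]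
      have hRw : reflB N w = reflB N x ++ reflB N d := by
        rw [hwd', reflB_append]
      have lhsEq : plusB y ++ reflB N x
          = (plusB d ++ reflB N x) ++ (reflB N d ++ reflB N x) := by
        rw [hPy, hRw]
        simp [List.append_assoc]
      rw [lhsEq, hPlusAll]
      refine append_lt_of_lt _ _ ?_ hfam2
      simp only [List.length_append, reflB_length, plusB_length hdne, plusB_length hwne]
      rw [hwd', List.length_append]
      omega
  · -- hx' : x = plusB w ++ c', hvb' : reflB N (plusB w) = c' ++ y  (fam1 case)
    rcases List.eq_nil_or_concat c' with rfl | ⟨_, _, hc'⟩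
    · simp only [List.append_nil] at hx'
      simp only [List.nil_append] at hvb'
      rw [hPlusAll, hx', ← hvb', hPvb]
      refine append_lt_of_lt _ _ ?_ hrw
      rw [reflB_length, hvlen]
    · have ha'ne : c' ≠ [] := by rw [hc']; simp
      have hplus : reflB N w = c' ++ plusB y := by
        rw [← hPvb, hvb', plusB_append c' hy]
      have hda' : ∀ c ∈ plusB y ++ c', c ≤ N - 1 := by
        intro c hc
        refine reflB_digits N w c ?_
        rw [hplus]
        rcases List.mem_append.1 hc with h | h
        · exact List.mem_append_right _ h
        · exact List.mem_append_left _ h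
      have hwsplit : w = reflB N c' ++ reflB N (plusB y) := by
        conv_lhs => rw [← reflB_reflB hwd, hplus, reflB_append]
      have hpyne : plusB y ≠ [] := plusB_ne_nil hy
      have hi : c'.length < w.length := by
        have := congrArg List.length hplus
        simp only [List.length_append, reflB_length] at this
        have := List.length_pos_iff.2 hpyne
        omega
      have hrot : rotB w c'.length = reflB N (plusB y ++ c') := by
        show w.drop c'.length ++ w.take c'.length = _
        rw [reflB_append]
        congr 1
        · conv_lhs => rw [hwsplit]
          exact List.drop_left' (by rw [reflB_length])
        · conv_lhs => rw [hwsplit]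
          exact List.take_left' (by rw [reflB_length])
      have hfam1 := (hineq c'.length hi).1
      rw [hrot] at hfam1
      have key : plusB y ++ c' ≤ w := by
        have hlen2 : (reflB N w).length = (reflB N (plusB y ++ c')).length := by
          simp only [reflB_length, List.length_append]
          have := congrArg List.length hplus
          simp only [List.length_append, reflB_length] at this
          have := plusB_length hy
          omega
        have := reflB_le_reflB hlen2 (reflB_digits _ _) hfam1
        rwa [reflB_reflB hwd, reflB_reflB hda'] at this
      have key2 : plusB y ++ c' < plusB w := lt_of_le_of_lt key (lt_plusB hwne)
      have lhsEq : plusB y ++ reflB N x = (plusB y ++ c') ++ (y ++ reflB N c') := by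
        rw [hx', reflB_append, hvb']
        simp [List.append_assoc]
      rw [lhsEq, hPlusAll]
      refine append_lt_of_lt _ _ ?_ key2
      have := congrArg List.length hplus
      simp only [List.length_append, reflB_length, plusB_length hy] at this ⊢
      rw [plusB_length hwne]
      omega

lemma phi_step {N : ℕ} {B : List ℕ} (hg : Good N B) (hp : Phi N (B ++ reflB N B)) :
    Phi N ((B ++ plusB (reflB N B)) ++ reflB N (B ++ plusB (reflB N B))) := by
  have hBne : B ≠ [] := hg.ne_nil
  have hBd : ∀ c ∈ B, c ≤ N - 1 := hg.1
  have hB2ne : reflB N B ≠ [] := reflB_ne_nil hBne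
  have hpB2ne : plusB (reflB N B) ≠ [] := plusB_ne_nil hB2ne
  set D := reflB N (plusB (reflB N B)) with hDdef
  have hDne : D ≠ [] := reflB_ne_nil hpB2ne
  have hPD : plusB D = B := plus_refl_plus_refl hg
  have hRBB : reflB N (reflB N B) = B := reflB_reflB hBd
  have hRB' : reflB N (B ++ plusB (reflB N B)) = reflB N B ++ D := by
    rw [reflB_append]
  have hRW : reflB N (B ++ reflB N B) = reflB N B ++ B := by
    rw [reflB_append, hRBB]
  have hPW : plusB (B ++ reflB N B) = B ++ plusB (reflB N B) := plusB_append B hB2ne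
  have hCne : reflB N B ++ D ≠ [] := by simp [hB2ne]
  have hPC : plusB (reflB N B ++ D) = reflB N B ++ B := by
    rw [plusB_append _ hDne, hPD]
  -- lengths
  have LB : (reflB N B).length = B.length := reflB_length N B
  have LpB : (plusB (reflB N B)).length = B.length := by rw [plusB_length hB2ne, LB]
  have LD : D.length = B.length := by rw [hDdef, reflB_length, LpB]
  -- γ : reflB N B < B
  have hgamma : reflB N B < B := by
    have h1 := hp B (reflB N B) rfl hBne hB2ne
    rw [hPW] at h1
    rcases (append_lt_append_iff (x := plusB (reflB N B)) (y := B)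
        (reflB N B) (plusB (reflB N B)) (by rw [LpB])).1 h1 with h | ⟨heq, _⟩
    · exact lt_trans (lt_plusB hB2ne) h
    · exact lt_of_lt_of_eq (lt_plusB hB2ne) heq
  have hBB : reflB N B ++ B < B ++ plusB (reflB N B) :=
    append_lt_of_lt _ _ (by rw [LB]) hgamma
  intro x y hxy hx hy
  have hPV : plusB ((B ++ plusB (reflB N B)) ++ reflB N (B ++ plusB (reflB N B)))
      = (B ++ plusB (reflB N B)) ++ (reflB N B ++ B) := by
    rw [hRB', plusB_append _ hCne, hPC]
  rw [hPV]
  rw [hRB'] at hxy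
  -- the degenerate middle split, used twice
  have midCase : x = B ++ plusB (reflB N B) → y = reflB N B ++ D →
      plusB y ++ reflB N x < (B ++ plusB (reflB N B)) ++ (reflB N B ++ B) := by
    rintro rfl rfl
    rw [hPC, hRB']
    refine append_lt_of_lt _ _ ?_ hBB
    simp only [List.length_append, LB, LpB]
  -- the other degenerate split, also used twice
  have edge : x = (B ++ plusB (reflB N B)) ++ reflB N B →
      plusB D ++ reflB N x < (B ++ plusB (reflB N B)) ++ (reflB N B ++ B) := by
    rintro rfl
    rw [reflB_append, hRB', hRBB, hPD]
    have inner : reflB N B ++ (D ++ B) < plusB (reflB N B) ++ (reflB N B ++ B) :=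
      append_lt_of_lt _ _ (by rw [plusB_length hB2ne]) (lt_plusB hB2ne)
    calc B ++ ((reflB N B ++ D) ++ B)
        = B ++ (reflB N B ++ (D ++ B)) := by simp [List.append_assoc]
      _ < B ++ (plusB (reflB N B) ++ (reflB N B ++ B)) := append_lt_append_left inner
      _ = (B ++ plusB (reflB N B)) ++ (reflB N B ++ B) := by simp [List.append_assoc]
  rcases List.append_eq_append_iff.1 hxy.symm with ⟨a', hv', hy'⟩ | ⟨c', hx', hvb'⟩
  · -- hv' : B ++ plusB (reflB N B) = x ++ a', hy' : y = a' ++ (reflB N B ++ D)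
    rcases List.eq_nil_or_concat a' with rfl | ⟨_, _, ha'⟩
    · simp only [List.append_nil] at hv'
      simp only [List.nil_append] at hy'
      exact midCase hv'.symm hy'
    · have ha'ne : a' ≠ [] := by rw [ha']; simp
      rw [← hPW] at hv'
      obtain ⟨d, hdne, hWs, hpd⟩ := plusB_split (by simp [hBne]) hv' ha'ne
      have hphi := hp x d hWs hx hdne
      rw [hPW] at hphi
      have hRWs : reflB N B ++ B = reflB N x ++ reflB N d := by
        rw [← hRW, hWs, reflB_append]
      have hPy : plusB y = plusB d ++ (reflB N B ++ B) := by
        rw [hy', plusB_append _ hCne, hPC, ← hpd]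
      have lhsEq : plusB y ++ reflB N x
          = (plusB d ++ reflB N x) ++ (reflB N d ++ reflB N x) := by
        rw [hPy, hRWs]
        simp [List.append_assoc]
      rw [lhsEq]
      refine append_lt_of_lt _ _ ?_ hphi
      have hl := congrArg List.length hWs
      have hl2 := plusB_length hdne
      simp only [List.length_append, reflB_length, LB] at hl ⊢
      omega
  · -- hx' : x = (B ++ plusB (reflB N B)) ++ c', hvb' : reflB N B ++ D = c' ++ y
    rcases List.eq_nil_or_concat c' with rfl | ⟨_, _, hc'⟩
    · simp only [List.append_nil] at hx'
      simp only [List.nil_append] at hvb'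
      exact midCase hx' hvb'.symm
    · have hc'ne : c' ≠ [] := by rw [hc']; simp
      rcases List.append_eq_append_iff.1 hvb' with ⟨c₂, hc2, hD2⟩ | ⟨a₂, hb2, hy2⟩
      · -- hc2 : c' = reflB N B ++ c₂, hD2 : D = c₂ ++ y
        rcases List.eq_nil_or_concat c₂ with rfl | ⟨_, _, hc₂⟩
        · simp only [List.append_nil] at hc2
          simp only [List.nil_append] at hD2
          rw [show y = D from hD2.symm]
          exact edge (by rw [hx', hc2])
        · have hc₂ne : c₂ ≠ [] := by rw [hc₂]; simp
          have hBs : B = c₂ ++ plusB y := by rw [← hPD, hD2, plusB_append _ hy]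
          have hWs : B ++ reflB N B = c₂ ++ (plusB y ++ reflB N B) := by
            rw [← List.append_assoc, ← hBs]
          have hphi := hp c₂ (plusB y ++ reflB N B) hWs hc₂ne (by simp [plusB_ne_nil hy])
          rw [hPW, plusB_append _ hB2ne] at hphi
          have firstlt : plusB y ++ (reflB N B ++ c₂) < B ++ plusB (reflB N B) := by
            refine lt_trans ?_ (by simpa [List.append_assoc] using hphi)
            refine append_lt_append_left ?_
            exact append_lt_of_lt _ _ (by rw [plusB_length hB2ne]) (lt_plusB hB2ne)
          have lhsEq : plusB y ++ reflB N x
              = (plusB y ++ (reflB N B ++ c₂)) ++ (y ++ (B ++ reflB N c₂)) := by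
            rw [hx', hc2]
            simp only [reflB_append, hRBB, ← hDdef]
            rw [hD2]
            simp [List.append_assoc]
          rw [lhsEq]
          refine append_lt_of_lt _ _ ?_ firstlt
          have hl := congrArg List.length hD2
          have hl2 := plusB_length hy
          simp only [List.length_append, LB, LpB, LD] at hl ⊢
          omega
      · -- hb2 : reflB N B = c' ++ a₂, hy2 : y = a₂ ++ D
        rcases List.eq_nil_or_concat a₂ with rfl | ⟨_, _, ha₂⟩
        · simp only [List.append_nil] at hb2
          simp only [List.nil_append] at hy2
          rw [hy2]
          exact edge (by rw [hx', ← hb2])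
        · have ha₂ne : a₂ ≠ [] := by rw [ha₂]; simp
          -- c' is a proper prefix of reflB N B
          have hWs : B ++ reflB N B = (B ++ c') ++ a₂ := by
            rw [hb2]; simp [List.append_assoc]
          have hphi := hp (B ++ c') a₂ hWs (by simp [hBne]) ha₂ne
          rw [hPW, reflB_append] at hphi
          have hPy : plusB y = a₂ ++ B := by rw [hy2, plusB_append _ hDne, hPD]
          have firstlt : a₂ ++ (B ++ c') < B ++ plusB (reflB N B) := by
            refine lt_trans ?_ hphi
            exact append_lt_of_lt _ _ (by rw [plusB_length ha₂ne]) (lt_plusB ha₂ne)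
          have lhsEq : plusB y ++ reflB N x
              = (a₂ ++ (B ++ c')) ++ (a₂ ++ (D ++ reflB N c')) := by
            rw [hPy, hx']
            simp only [reflB_append, hRBB, ← hDdef]
            rw [hb2]
            simp [List.append_assoc]
          rw [lhsEq]
          refine append_lt_of_lt _ _ ?_ firstlt
          have hl := congrArg List.length hb2
          simp only [List.length_append, LB, LpB] at hl ⊢
          omega

lemma good_base {N : ℕ} {w : List ℕ} (hadm : Admissible N w) : Good N (plusB w) := by
  obtain ⟨hwne, hdig, hlast, _⟩ := hadm
  obtain ⟨U, b0, hwU⟩ := exists_concat hwne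
  have hb0 : b0 < N - 1 := by rwa [hwU, getLast!_concat] at hlast
  rw [hwU, plusB_concat]
  refine ⟨?_, U, b0 + 1, rfl, by omega, by omega⟩
  intro c hc
  rcases List.mem_append.1 hc with h | h
  · have := hdig c (by rw [hwU]; exact List.mem_append_left _ h)
    omega
  · simp at h
    omega

lemma good_step {N : ℕ} {B : List ℕ} (hg : Good N B) : Good N (B ++ plusB (reflB N B)) := by
  obtain ⟨hd, U, b, hBU, hb1, hb2⟩ := hg
  have h1 : plusB (reflB N B) = reflB N U ++ [N - b] := by
    rw [hBU, reflB_append, show reflB N [b] = [N - 1 - b] from rfl, plusB_concat]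
    congr 2
    omega
  rw [h1, ← List.append_assoc]
  refine ⟨?_, B ++ reflB N U, N - b, rfl, by omega, by omega⟩
  intro c hc
  rcases List.mem_append.1 hc with h | h
  · rcases List.mem_append.1 h with h' | h'
    · exact hd c h'
    · exact reflB_digits N U c h'
  · simp at h
    omega

lemma gtm_good {N : ℕ} {w : List ℕ} (hadm : Admissible N w) :
    ∀ n, Good N (gtmBlock N w n)
  | 0 => good_base hadm
  | n + 1 => good_step (gtm_good hadm n)

lemma gtm_phi {N : ℕ} {w : List ℕ} (hadm : Admissible N w) :
    ∀ n, Phi N (gtmBlock N w n ++ reflB N (gtmBlock N w n))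
  | 0 => phi_base hadm
  | n + 1 => phi_step (gtm_good hadm n) (gtm_phi hadm n)

lemma rotB_length (V : List ℕ) (j : ℕ) (hj : j ≤ V.length) :
    (rotB V j).length = V.length := by
  unfold rotB
  rw [List.length_append, List.length_drop, List.length_take]
  omega

lemma phi_rot {N : ℕ} {V : List ℕ} (hV : Phi N V) (hVne : V ≠ []) {j : ℕ}
    (h0 : 0 < j) (hj : j < V.length) : rotB V j ≤ V := by
  have hsplit : V = V.take j ++ V.drop j := (List.take_append_drop j V).symm
  have hx : V.take j ≠ [] := List.ne_nil_of_length_pos (by rw [List.length_take]; omega)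
  have hy : V.drop j ≠ [] := List.ne_nil_of_length_pos (by rw [List.length_drop]; omega)
  have h := hV _ _ hsplit hx hy
  have h2 : V.drop j ++ V.take j < plusB (V.drop j) ++ reflB N (V.take j) :=
    append_lt_of_lt _ _ (by rw [plusB_length hy]) (lt_plusB hy)
  have h3 : rotB V j < plusB V := lt_trans h2 h
  refine (lt_plusB_iff_le ?_ hVne).1 h3
  rw [rotB_length V j (le_of_lt hj)]

lemma lex_getD : ∀ {u v : List ℕ}, u.length = v.length → u < v →
    ∃ q, q < u.length ∧ (∀ k, k < q → u.getD k 0 = v.getD k 0) ∧ u.getD q 0 < v.getD q 0 := by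
  intro u
  induction u with
  | nil => intro v hlen h; exact absurd h (by
      have : v = [] := by simpa using hlen.symm
      rw [this]; exact not_lt_nil _)
  | cons a u ih =>
    intro v hlen h
    match v with
    | [] => simp at hlen
    | b :: v =>
      rcases lex_cons_cons.1 h with hab | ⟨rfl, h'⟩
      · exact ⟨0, by simp, by omega, by simpa using hab⟩
      · obtain ⟨q, hq, hpre, hlt⟩ := ih (by simpa using hlen) h'
        refine ⟨q + 1, by simpa using hq, ?_, by simpa using hlt⟩
        intro k hk
        match k with
        | 0 => simp
        | k + 1 =>
          have := hpre k (by omega)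
          simpa using this

lemma per_le_per {u v : List ℕ} (hlen : u.length = v.length) (h : u ≤ v) :
    seqLe (per u) (per v) := by
  rcases le_iff_lt_or_eq'.1 h with h' | rfl
  · obtain ⟨q, hq, hpre, hlt⟩ := lex_getD hlen h'
    left
    refine ⟨q, ?_, ?_⟩
    · intro k hk
      show u.getD (k % u.length) 0 = v.getD (k % v.length) 0
      rw [Nat.mod_eq_of_lt (by omega), ← hlen, Nat.mod_eq_of_lt (by omega)]
      exact hpre k hk
    · show u.getD (q % u.length) 0 < v.getD (q % v.length) 0
      rw [Nat.mod_eq_of_lt (by omega), ← hlen, Nat.mod_eq_of_lt (by omega)]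
      exact hlt
  · right; rfl

lemma getD_rotB {V : List ℕ} {j : ℕ} (hj : j ≤ V.length) {k : ℕ} (hk : k < V.length) :
    (rotB V j).getD k 0 = V.getD ((k + j) % V.length) 0 := by
  unfold rotB
  rcases lt_or_ge k (V.length - j) with h | h
  · rw [List.getD_append _ _ _ _ (by simp; omega)]
    rw [show (k + j) % V.length = j + k by rw [Nat.mod_eq_of_lt (by omega)]; omega]
    simp [List.getD_eq_getElem?_getD, List.getElem?_drop]
  · rw [List.getD_append_right _ _ _ _ (by simp; omega)]
    have h1 : (k + j) % V.length = k + j - V.length := by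
      rw [Nat.mod_eq_sub_mod (by omega), Nat.mod_eq_of_lt (by omega)]
    rw [h1]
    have h2 : k - (V.drop j).length = k + j - V.length := by simp; omega
    rw [h2]
    have h3 : k + j - V.length < j := by omega
    simp [List.getD_eq_getElem?_getD, List.getElem?_take, h3]

lemma shift_per {V : List ℕ} (hVne : V ≠ []) (i : ℕ) :
    shift (per V) i = per (rotB V (i % V.length)) := by
  have hM : 0 < V.length := List.length_pos_iff.2 hVne
  have hj : i % V.length ≤ V.length := le_of_lt (Nat.mod_lt _ hM)
  funext n
  show per V (n + i) = (rotB V (i % V.length)).getD (n % (rotB V (i % V.length)).length) 0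
  rw [rotB_length V _ hj]
  rw [getD_rotB hj (Nat.mod_lt _ hM)]
  show V.getD ((n + i) % V.length) 0 = _
  congr 1
  exact Nat.add_mod n i V.length

lemma rotB_zero (V : List ℕ) : rotB V 0 = V := by simp [rotB]

end S12

/-- Lemma 6.1 — `(θ_1⋯θ_{2^n p} reflection(θ_1⋯θ_{2^n p}))^∞`
is shift-maximal for every `n`. -/
theorem stmt12 (N : ℕ) (hN : 2 ≤ N) (w : List ℕ) (hadm : Admissible N w) :
    ∀ n : ℕ, ∀ i : ℕ, 1 ≤ i →
      seqLe (shift (per (gtmBlock N w n ++ reflB N (gtmBlock N w n))) i)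
        (per (gtmBlock N w n ++ reflB N (gtmBlock N w n))) := by
  intro n i _hi
  have hGood := S12.gtm_good hadm n
  have hPhi := S12.gtm_phi hadm n
  set V := gtmBlock N w n ++ reflB N (gtmBlock N w n) with hVdef
  have hVne : V ≠ [] := by
    rw [hVdef]
    simp [hGood.ne_nil]
  have hM : 0 < V.length := List.length_pos_iff.2 hVne
  rw [S12.shift_per hVne i]
  rcases Nat.eq_zero_or_pos (i % V.length) with h0 | hpos
  · rw [h0, S12.rotB_zero]
    exact Or.inr rfl
  · exact S12.per_le_per (S12.rotB_length V _ (le_of_lt (Nat.mod_lt _ hM)))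
      (S12.phi_rot hPhi hVne hpos (Nat.mod_lt _ hM))
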